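/- Define f_n(t) = (1 − t)^n · Σ_{j=0}^{n−1} t^j · C(n+j−1, j). If t ∈ ℂ satisfies |t(1−t)| > 1/4, then the sequence (f_n(t))_{n≥1} does not converge; indeed |f_{n+1}(t) − f_n(t)| = C(2n,n) |t(1−t)|^n |t − 1/2| → ∞ as n → ∞. -/

import Mathlib

open Filter

/-- `f_n(t) = (1-t)^n ∑_{j=0}^{n-1} t^j C(n+j-1,j)`, the ensemble average polynomial
after the substitution `t = z/β`. -/
noncomputable def fEns (n : ℕ) (t : ℂ) : ℂ :=
  (1 - t) ^ n * ∑ j ∈ Finset.range n, t ^ j * (Nat.choose (n + j - 1) j : ℂ)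

private lemma sumB (t : ℂ) (m : ℕ) : ∀ N : ℕ,
    (1 - t) * ∑ j ∈ Finset.range (N + 1), t ^ j * (Nat.choose (m + 1 + j) j : ℂ)
      = (∑ j ∈ Finset.range (N + 1), t ^ j * (Nat.choose (m + j) j : ℂ))
        - (Nat.choose (m + 1 + N) N : ℂ) * t ^ (N + 1) := by
  intro N
  induction N with
  | zero => simp
  | succ N ih =>
    rw [Finset.sum_range_succ, Finset.sum_range_succ
      (f := fun j => t ^ j * (Nat.choose (m + j) j : ℂ))]
    have pascal : (Nat.choose (m + 1 + (N + 1)) (N + 1) : ℂ)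
        = (Nat.choose (m + 1 + N) N : ℂ) + (Nat.choose (m + (N + 1)) (N + 1) : ℂ) := by
      have h1 : m + 1 + (N + 1) = (m + 1 + N) + 1 := by omega
      have h2 : m + (N + 1) = m + 1 + N := by omega
      rw [h1, h2, Nat.choose_succ_succ]
      push_cast; ring
    rw [mul_add, ih]
    linear_combination (t ^ (N + 1)) * pascal

private lemma diff_eq (t : ℂ) (m : ℕ) :
    fEns (m + 2) t - fEns (m + 1) t
      = (Nat.choose (2 * (m + 1)) (m + 1) : ℂ) * (t * (1 - t)) ^ (m + 1) * (1 / 2 - t) := by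
  have e1 : fEns (m + 1) t
      = (1 - t) ^ (m + 1) * ∑ j ∈ Finset.range (m + 1), t ^ j * (Nat.choose (m + j) j : ℂ) := by
    unfold fEns
    congr 1
    refine Finset.sum_congr rfl fun j _ => ?_
    rw [show m + 1 + j - 1 = m + j from by omega]
  have e2 : fEns (m + 2) t
      = (1 - t) ^ (m + 1) * ((1 - t) *
          ∑ j ∈ Finset.range (m + 2), t ^ j * (Nat.choose (m + 1 + j) j : ℂ)) := by
    unfold fEns
    rw [show (1 - t) ^ (m + 2) = (1 - t) ^ (m + 1) * (1 - t) from by ring, mul_assoc]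
    congr 2
    refine Finset.sum_congr rfl fun j _ => ?_
    rw [show m + 2 + j - 1 = m + 1 + j from by omega]
  rw [e1, e2, sumB t m (m + 1), Finset.sum_range_succ]
  have hsym : Nat.choose (2 * m + 1) m = Nat.choose (2 * m + 1) (m + 1) := by
    rw [show m + 1 = 2 * m + 1 - m from by omega]
    exact (Nat.choose_symm (by omega)).symm
  have hc : (Nat.choose (2 * (m + 1)) (m + 1) : ℂ) = 2 * (Nat.choose (2 * m + 1) (m + 1) : ℂ) := by
    rw [show 2 * (m + 1) = (2 * m + 1) + 1 from by omega, Nat.choose_succ_succ, ← hsym]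
    push_cast; ring
  have h1 : (Nat.choose (m + 1 + (m + 1)) (m + 1) : ℂ) = (Nat.choose (2 * (m + 1)) (m + 1) : ℂ) := by
    norm_num [show m + 1 + (m + 1) = 2 * (m + 1) from by omega]
  have h2 : (Nat.choose (m + (m + 1)) (m + 1) : ℂ) = (Nat.choose (2 * m + 1) (m + 1) : ℂ) := by
    norm_num [show m + (m + 1) = 2 * m + 1 from by omega]
  rw [h1, h2, hc, mul_pow]
  ring

/-- Outside the closure of the convergence region, i.e. when `|t(1-t)| > 1/4`, the sequence
`(f_n(t))` diverges: the consecutive differences satisfy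
`|f_{n+1}(t) - f_n(t)| = C(2n,n) |t(1-t)|^n |t - 1/2|`, which tends to infinity. -/
theorem fEns_divergence (t : ℂ) (ht : 1 / 4 < ‖t * (1 - t)‖) :
    (∀ n : ℕ, 1 ≤ n →
      ‖fEns (n + 1) t - fEns n t‖ =
        (Nat.choose (2 * n) n : ℝ) * ‖t * (1 - t)‖ ^ n *
          ‖t - 1 / 2‖) ∧
    Tendsto (fun n : ℕ => ‖fEns (n + 1) t - fEns n t‖) atTop atTop ∧
    ¬ ∃ L : ℂ, Tendsto (fun n : ℕ => fEns n t) atTop (nhds L) := by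
  set x : ℝ := ‖t * (1 - t)‖ with hx
  have habs : ∀ n : ℕ, 1 ≤ n →
      ‖fEns (n + 1) t - fEns n t‖ =
        (Nat.choose (2 * n) n : ℝ) * x ^ n * ‖t - 1 / 2‖ := by
    intro n hn
    obtain ⟨m, rfl⟩ : ∃ m, n = m + 1 := ⟨n - 1, by omega⟩
    rw [show m + 1 + 1 = m + 2 from rfl, diff_eq t m]
    rw [norm_mul, norm_mul, norm_pow, Complex.norm_natCast]
    congr 1
    rw [show (1 : ℂ) / 2 - t = -(t - 1 / 2) from by ring, norm_neg]
  have htop : Tendsto (fun n : ℕ => ‖fEns (n + 1) t - fEns n t‖) atTop atTop := by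
    have hx4 : (1 : ℝ) < 4 * x := by linarith
    have hx0 : (0 : ℝ) < x := by positivity
    have hc0 : (0 : ℝ) < ‖t - 1 / 2‖ := by
      rw [norm_pos_iff]
      intro h
      have h2 : t = 1 / 2 := sub_eq_zero.mp h
      have hxval : x = 1 / 4 := by
        rw [hx, h2, show (1 : ℂ) / 2 * (1 - 1 / 2) = 1 / 4 from by norm_num]
        norm_num [map_div₀]
      rw [hxval] at ht
      norm_num at ht
    set r : ℝ := (4 * x)⁻¹ with hr
    have hr0 : 0 < r := by positivity
    have hr1 : r < 1 := by
      rw [hr, inv_lt_one_iff₀]; right; exact hx4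
    -- (2n+1) * r^n → 0
    have hsum : Tendsto (fun n : ℕ => (2 * (n : ℝ) + 1) * r ^ n) atTop (nhds 0) := by
      have h1 : Tendsto (fun n : ℕ => (n : ℝ) * r ^ n) atTop (nhds 0) := by
        have := (summable_pow_mul_geometric_of_norm_lt_one 1
          (r := r) (by rwa [Real.norm_eq_abs, abs_of_pos hr0])).tendsto_atTop_zero
        simpa using this
      have h2 : Tendsto (fun n : ℕ => r ^ n) atTop (nhds 0) :=
        tendsto_pow_atTop_nhds_zero_of_lt_one hr0.le hr1
      have h3 : Tendsto (fun n : ℕ => 2 * ((n : ℝ) * r ^ n) + r ^ n) atTop (nhds 0) := by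
        simpa using (h1.const_mul 2).add h2
      exact h3.congr fun n => by ring
    have hpos : ∀ n : ℕ, 0 < (2 * (n : ℝ) + 1) * r ^ n := fun n => by positivity
    have hinv : Tendsto (fun n : ℕ => ((2 * (n : ℝ) + 1) * r ^ n)⁻¹) atTop atTop := by
      apply Filter.Tendsto.inv_tendsto_nhdsGT_zero
      rw [tendsto_nhdsWithin_iff]
      exact ⟨hsum, Filter.Eventually.of_forall fun n => hpos n⟩
    have hlow : Tendsto (fun n : ℕ =>
        ‖t - 1 / 2‖ * ((2 * (n : ℝ) + 1) * r ^ n)⁻¹) atTop atTop :=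
      hinv.const_mul_atTop hc0
    apply tendsto_atTop_mono' _ _ hlow
    filter_upwards [eventually_ge_atTop 1] with n hn
    rw [habs n hn]
    have hbin : ((4 : ℝ)) ^ n ≤ (2 * (n : ℝ) + 1) * (Nat.choose (2 * n) n : ℝ) := by
      have := Nat.four_pow_le_two_mul_add_one_mul_central_binom n
      calc ((4 : ℝ)) ^ n = ((4 ^ n : ℕ) : ℝ) := by push_cast; ring
        _ ≤ (((2 * n + 1) * (2 * n).choose n : ℕ) : ℝ) := by exact_mod_cast this
        _ = (2 * (n : ℝ) + 1) * (Nat.choose (2 * n) n : ℝ) := by push_cast; ring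
    have key : ((2 * (n : ℝ) + 1) * r ^ n)⁻¹ ≤ (Nat.choose (2 * n) n : ℝ) * x ^ n := by
      have hrx : x ^ n * r ^ n = (4 : ℝ)⁻¹ ^ n := by
        rw [← mul_pow, hr]
        congr 1
        field_simp
      have h9 : (1 : ℝ) ≤ ((Nat.choose (2 * n) n : ℝ) * x ^ n) * ((2 * (n : ℝ) + 1) * r ^ n) :=
        calc (1 : ℝ) = 4 ^ n * (4 : ℝ)⁻¹ ^ n := by rw [← mul_pow]; norm_num
          _ ≤ ((2 * (n : ℝ) + 1) * (Nat.choose (2 * n) n : ℝ)) * (4 : ℝ)⁻¹ ^ n := by gcongr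
          _ = ((Nat.choose (2 * n) n : ℝ) * x ^ n) * ((2 * (n : ℝ) + 1) * r ^ n) := by
              rw [← hrx]; ring
      rw [inv_le_iff_one_le_mul₀ (hpos n)]
      refine le_trans h9 (le_of_eq ?_)
      ring
    calc ‖t - 1 / 2‖ * ((2 * (n : ℝ) + 1) * r ^ n)⁻¹
        ≤ ‖t - 1 / 2‖ * ((Nat.choose (2 * n) n : ℝ) * x ^ n) := by
          gcongr
      _ = (Nat.choose (2 * n) n : ℝ) * x ^ n * ‖t - 1 / 2‖ := by ring
  refine ⟨habs, htop, ?_⟩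
  · rintro ⟨L, hL⟩
    have hdiff : Tendsto (fun n : ℕ => fEns (n + 1) t - fEns n t) atTop (nhds (L - L)) :=
      (hL.comp (tendsto_add_atTop_nat 1)).sub hL
    have h0 : Tendsto (fun n : ℕ => ‖fEns (n + 1) t - fEns n t‖) atTop (nhds 0) := by
      rw [sub_self] at hdiff
      simpa [Function.comp_def] using (continuous_norm.tendsto (0 : ℂ)).comp hdiff
    exact not_tendsto_nhds_of_tendsto_atTop htop 0 h0
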